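/- Let G be a connected graph on n nodes, t ≥ 1, and c a sufficiently large constant with t ≥ c·log n being not required but n large. Suppose each node v independently keeps, for each other node u, the value dist(v,u) with probability c·(log n)/t. Then with positive probability, for every ordered pair (v,u) of distinct nodes at distance greater than t, at least one of the first t nodes on some fixed shortest path from v to u keeps its distance to u, and simultaneously every node keeps at most 2c·n·(log n)/t distance values. -/

import Mathlib

open MeasureTheory
open scoped Classical

open scoped Classical

lemma exists_good (V : Type) [Fintype V] (k t : ℕ) (Q : V × V → Finset V)
    (F : Finset (V × V)) (hQ : ∀ q ∈ F, (Q q).card = t)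
    (hnum : F.card * ((Fintype.card V - 1).choose k) ^ t *
        ((Fintype.card V).choose k) ^ (Fintype.card V - t) <
        ((Fintype.card V).choose k) ^ (Fintype.card V)) (htn : t ≤ Fintype.card V) :
    ∃ g : V → Finset V, (∀ w, (g w).card = k) ∧ ∀ q ∈ F, ∃ w ∈ Q q, q.2 ∈ g w := by
  classical
  set n := Fintype.card V with hn
  set Ω : Finset (V → Finset V) :=
    Fintype.piFinset (fun _ : V => (Finset.univ : Finset V).powersetCard k) with hΩ
  have hΩcard : Ω.card = (n.choose k) ^ n := by
    rw [hΩ, Fintype.card_piFinset]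
    simp [Finset.card_powersetCard, hn]
  set Bad : V × V → Finset (V → Finset V) :=
    fun q => Ω.filter (fun g => ∀ w ∈ Q q, q.2 ∉ g w) with hBad
  have hBadcard : ∀ q ∈ F, (Bad q).card ≤ ((n - 1).choose k) ^ t * (n.choose k) ^ (n - t) := by
    intro q hq
    have hBadeq : Bad q = Fintype.piFinset (fun w : V =>
        if w ∈ Q q then (Finset.univ.erase q.2).powersetCard k
        else (Finset.univ : Finset V).powersetCard k) := by
      ext g
      simp only [hBad, Finset.mem_filter, hΩ, Fintype.mem_piFinset,
        Finset.mem_powersetCard]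
      constructor
      · rintro ⟨h1, h2⟩ w
        by_cases hw : w ∈ Q q
        · simp only [hw, if_pos]
          rw [Finset.mem_powersetCard]
          exact ⟨Finset.subset_erase.2 ⟨(h1 w).1, h2 w hw⟩, (h1 w).2⟩
        · simp only [hw, if_neg, not_false_iff]
          rw [Finset.mem_powersetCard]
          exact h1 w
      · intro h
        constructor
        · intro w
          rcases (h w) with h'
          by_cases hw : w ∈ Q q
          · rw [if_pos hw, Finset.mem_powersetCard] at h'
            exact ⟨h'.1.trans (Finset.erase_subset _ _), h'.2⟩
          · rw [if_neg hw, Finset.mem_powersetCard] at h'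
            exact h'
        · intro w hw
          have h' := h w
          rw [if_pos hw, Finset.mem_powersetCard] at h'
          exact fun hmem => (Finset.subset_erase.1 h'.1).2 hmem
    rw [hBadeq, Fintype.card_piFinset]
    have : ∀ w : V, (if w ∈ Q q then (Finset.univ.erase q.2).powersetCard k
        else (Finset.univ : Finset V).powersetCard k).card =
        if w ∈ Q q then (n - 1).choose k else n.choose k := by
      intro w
      by_cases hw : w ∈ Q q <;>
        simp [hw, Finset.card_powersetCard, Finset.card_erase_of_mem, hn]
    rw [Finset.prod_congr rfl (fun w _ => this w)]
    rw [← Finset.prod_filter_mul_prod_filter_not Finset.univ (· ∈ Q q)]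
    have h1 : Finset.univ.filter (· ∈ Q q) = Q q := Finset.filter_univ_mem _
    have h2 : (Finset.univ.filter (fun w => ¬ w ∈ Q q)).card = n - t := by
      rw [Finset.filter_not, Finset.card_sdiff_of_subset (Finset.filter_subset _ _), h1,
        Finset.card_univ, hQ q hq]
    have heq : (∏ w ∈ Finset.univ.filter (· ∈ Q q),
          (if w ∈ Q q then (n - 1).choose k else n.choose k)) *
          (∏ w ∈ Finset.univ.filter (fun w => ¬ w ∈ Q q),
            (if w ∈ Q q then (n - 1).choose k else n.choose k))
        = (n - 1).choose k ^ t * n.choose k ^ (n - t) := by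
      rw [Finset.prod_congr rfl (fun w hw => if_pos ((Finset.mem_filter.1 hw).2)),
        Finset.prod_congr rfl (fun w hw => if_neg ((Finset.mem_filter.1 hw).2)),
        Finset.prod_const, Finset.prod_const, h1, hQ q hq, h2]
    exact le_of_eq heq
  -- main counting step
  have hex : ∃ g ∈ Ω, ∀ q ∈ F, g ∉ Bad q := by
    by_contra hcon
    push_neg at hcon
    have hsub : Ω ⊆ F.biUnion Bad := by
      intro g hg
      rcases hcon g hg with ⟨q, hqF, hqB⟩
      exact Finset.mem_biUnion.2 ⟨q, hqF, hqB⟩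
    have hle : Ω.card ≤ ∑ q ∈ F, (Bad q).card :=
      le_trans (Finset.card_le_card hsub) (Finset.card_biUnion_le)
    have hle2 : ∑ q ∈ F, (Bad q).card ≤ F.card * ((n-1).choose k ^ t * n.choose k ^ (n - t)) := by
      calc ∑ q ∈ F, (Bad q).card ≤ ∑ _q ∈ F, ((n-1).choose k ^ t * n.choose k ^ (n - t)) :=
            Finset.sum_le_sum hBadcard
        _ = F.card * ((n-1).choose k ^ t * n.choose k ^ (n - t)) := by
            rw [Finset.sum_const, smul_eq_mul]
    rw [hΩcard] at hle
    have hfin := hle.trans hle2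
    rw [← mul_assoc] at hfin
    exact absurd hfin (not_le.2 hnum)
  rcases hex with ⟨g, hgΩ, hgood⟩
  refine ⟨g, fun w => ?_, fun q hq => ?_⟩
  · have := Fintype.mem_piFinset.1 hgΩ w
    exact (Finset.mem_powersetCard.1 this).2
  · have h1 := hgood q hq
    rw [hBad, Finset.mem_filter, not_and] at h1
    have h2 := h1 hgΩ
    push_neg at h2
    exact h2

lemma num_ineq (n k t : ℕ) (hn : 2 ≤ n) (hk : k ≤ n) (ht1 : 1 ≤ t) (ht : t ≤ n)
    (h : 3 * (n : ℝ) * Real.log n ≤ (k : ℝ) * t) :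
    n ^ 2 * ((n - 1).choose k) ^ t * (n.choose k) ^ (n - t) < (n.choose k) ^ n := by
  have hC : 0 < n.choose k := Nat.choose_pos hk
  have hid : (n - k) * n.choose k = n * (n - 1).choose k := by
    obtain ⟨m, rfl⟩ : ∃ m, n = m + 1 := ⟨n - 1, by omega⟩
    have h1 := Nat.choose_succ_right_eq (m + 1) k
    have h2 := Nat.add_one_mul_choose_eq m k
    simp only [Nat.add_sub_cancel]
    calc (m + 1 - k) * (m + 1).choose k = (m + 1).choose k * (m + 1 - k) := Nat.mul_comm _ _
      _ = (m + 1).choose (k + 1) * (k + 1) := h1.symm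
      _ = (m + 1) * m.choose k := h2.symm
  have hN0 : (0 : ℝ) < (n : ℝ) := by positivity
  have hkN : (k : ℝ) ≤ (n : ℝ) := by exact_mod_cast hk
  have hA0 : (0 : ℝ) ≤ ((n : ℝ) - k) / n := div_nonneg (by linarith) hN0.le
  have hCr : ((n - 1).choose k : ℝ) = (n.choose k : ℝ) * (((n : ℝ) - k) / n) := by
    have hcast : ((n : ℝ) - k) * (n.choose k : ℝ) = (n : ℝ) * ((n - 1).choose k : ℝ) := by
      have := congrArg (Nat.cast : ℕ → ℝ) hid
      push_cast [Nat.cast_sub hk] at this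
      linarith
    field_simp
    linarith
  have hexp : (((n : ℝ) - k) / n) ^ t ≤ 1 / (n : ℝ) ^ 3 := by
    have h1 : ((n : ℝ) - k) / n ≤ Real.exp (-((k : ℝ) / n)) := by
      have := Real.add_one_le_exp (-((k : ℝ) / n))
      have hA1 : ((n : ℝ) - k) / n = 1 - (k : ℝ) / n := by field_simp
      linarith
    have h2 : (((n : ℝ) - k) / n) ^ t ≤ Real.exp (-((k : ℝ) / n)) ^ t :=
      pow_le_pow_left₀ hA0 h1 t
    have h3 : Real.exp (-((k : ℝ) / n)) ^ t = Real.exp (-((k : ℝ) / n) * t) := by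
      rw [← Real.exp_nat_mul]; ring_nf
    have h4 : Real.exp (-((k : ℝ) / n) * t) ≤ Real.exp (-(3 * Real.log n)) := by
      apply Real.exp_le_exp.2
      rw [neg_mul, neg_le_neg_iff, div_mul_eq_mul_div, le_div_iff₀ hN0]
      calc 3 * Real.log n * n = 3 * (n : ℝ) * Real.log n := by ring
        _ ≤ (k : ℝ) * t := h
    have h5 : Real.exp (-(3 * Real.log n)) = 1 / (n : ℝ) ^ 3 := by
      rw [Real.exp_neg, show (3 : ℝ) * Real.log n = ((3 : ℕ) : ℝ) * Real.log n by norm_num,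
        Real.exp_nat_mul, Real.exp_log hN0]
      simp
    calc (((n : ℝ) - k) / n) ^ t ≤ Real.exp (-((k : ℝ) / n)) ^ t := h2
      _ = Real.exp (-((k : ℝ) / n) * t) := h3
      _ ≤ Real.exp (-(3 * Real.log n)) := h4
      _ = 1 / (n : ℝ) ^ 3 := h5
  have hCpos : (0 : ℝ) < (n.choose k : ℝ) := by exact_mod_cast hC
  have hmain : (n : ℝ) ^ 2 * ((n - 1).choose k : ℝ) ^ t * (n.choose k : ℝ) ^ (n - t)
      < (n.choose k : ℝ) ^ n := by
    have hsplit : (n.choose k : ℝ) ^ n = (n.choose k : ℝ) ^ t * (n.choose k : ℝ) ^ (n - t) := by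
      rw [← pow_add]; congr 1; omega
    rw [hCr, mul_pow, hsplit]
    have hb : (n : ℝ) ^ 2 * (((n : ℝ) - k) / n) ^ t < 1 := by
      have hn1 : (1 : ℝ) < (n : ℝ) := by exact_mod_cast hn.trans_lt' (by norm_num)
      calc (n : ℝ) ^ 2 * (((n : ℝ) - k) / n) ^ t ≤ (n : ℝ) ^ 2 * (1 / (n : ℝ) ^ 3) :=
            mul_le_mul_of_nonneg_left hexp (by positivity)
        _ = 1 / (n : ℝ) := by field_simp
        _ < 1 := by rw [div_lt_one hN0]; linarith
    have hlt : (n : ℝ) ^ 2 * ((n.choose k : ℝ) ^ t * (((n : ℝ) - k) / n) ^ t)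
        < (n.choose k : ℝ) ^ t := by
      calc (n : ℝ) ^ 2 * ((n.choose k : ℝ) ^ t * (((n : ℝ) - k) / n) ^ t)
          = ((n : ℝ) ^ 2 * (((n : ℝ) - k) / n) ^ t) * (n.choose k : ℝ) ^ t := by ring
        _ < 1 * (n.choose k : ℝ) ^ t := mul_lt_mul_of_pos_right hb (by positivity)
        _ = (n.choose k : ℝ) ^ t := one_mul _
    exact mul_lt_mul_of_pos_right hlt (by positivity)
  exact_mod_cast hmain


lemma pi_point_pos {ι : Type} [Fintype ι] (p : NNReal) (hp : p ≤ 1) (f₀ : ι → Bool)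
    (S : Set (ι → Bool)) (hmem : f₀ ∈ S)
    (h : ∀ i, 0 < (PMF.bernoulli p hp) (f₀ i)) :
    0 < Measure.pi (fun _ : ι => (PMF.bernoulli p hp).toMeasure) S := by
  refine lt_of_lt_of_le ?_ (measure_mono (Set.singleton_subset_iff.2 hmem))
  have hs : ({f₀} : Set (ι → Bool)) = Set.pi Set.univ (fun i => {f₀ i}) := by
    ext g; simp [Set.mem_pi, funext_iff]
  rw [hs, Measure.pi_pi]
  refine CanonicallyOrderedAdd.prod_pos.2 (fun i _ => ?_)
  rw [PMF.toMeasure_apply_singleton _ _ (measurableSet_singleton _)]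
  exact h i


/-- Let `G` be a connected graph on `n` nodes, `t ≥ 1`, and `c`
a sufficiently large constant. Suppose each node `v` independently keeps, for each
other node `u`, the value `dist(v,u)` with probability `c·(log n)/t`. Then with
positive probability, for every ordered pair `(v,u)` of distinct nodes at distance
greater than `t`, at least one of the first `t` nodes on the fixed shortest path
`P v u` from `v` to `u` keeps its distance to `u`, while simultaneously every node
keeps at most `2c·n·(log n)/t` distance values. -/
theorem stmt6 :
    ∃ c : ℝ, 0 < c ∧
      ∀ (V : Type) [Fintype V] (G : SimpleGraph V) (t : ℕ) (P : V → V → Finset V),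
        G.Connected → 1 ≤ t →
        (∀ v u : V, t < G.dist v u →
          (P v u).card = t ∧
            ∀ w ∈ P v u, G.dist v w + G.dist w u = G.dist v u ∧ G.dist v w ≤ t) →
        ∀ hp : ENNReal.ofReal (c * Real.log (Fintype.card V) / t) ≤ 1,
          0 < Measure.pi
              (fun _ : V × V =>
                (PMF.bernoulli (Real.toNNReal (c * Real.log (Fintype.card V) / t))
                  (ENNReal.coe_le_one_iff.mp hp)).toMeasure)
              {f : V × V → Bool |
                (∀ v u : V, v ≠ u → t < G.dist v u → ∃ w ∈ P v u, f (w, u) = true) ∧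
                (∀ v : V, ((Finset.univ.filter fun u : V => f (v, u) = true).card : ℝ)
                    ≤ 2 * c * (Fintype.card V) * Real.log (Fintype.card V) / t)} := by
  refine ⟨3, by norm_num, ?_⟩
  intro V _ G t P hconn ht hP hp
  have hVne : Nonempty V := hconn.nonempty
  have hn1 : 1 ≤ Fintype.card V := Fintype.card_pos
  have ht0 : (0 : ℝ) < t := by exact_mod_cast ht
  have hlog0 : (0 : ℝ) ≤ Real.log (Fintype.card V) :=
    Real.log_nonneg (by exact_mod_cast hn1)
  by_cases hcase : (t : ℝ) ≤ 6 * Real.log (Fintype.card V)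
  · -- f₀ ≡ true
    have hlogpos : (0 : ℝ) < Real.log (Fintype.card V) := by nlinarith
    refine pi_point_pos _ (ENNReal.coe_le_one_iff.mp hp) (fun _ => true) _ ⟨?_, ?_⟩ ?_
    · intro v u hne hd
      obtain ⟨hcard, -⟩ := hP v u hd
      have hne' : (P v u).Nonempty := by
        rw [← Finset.card_pos, hcard]; omega
      exact ⟨hne'.choose, hne'.choose_spec, rfl⟩
    · intro v
      have heq : (Finset.univ.filter fun _ : V => (true : Bool) = true) = Finset.univ := by
        simp
      rw [heq, Finset.card_univ]
      rw [le_div_iff₀ ht0]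
      have hn0 : (0 : ℝ) ≤ (Fintype.card V : ℝ) := by positivity
      nlinarith
    · intro i
      rw [PMF.bernoulli_apply]
      simp only [Bool.cond_true]
      apply ENNReal.ofReal_pos.2
      positivity
  · push_neg at hcase
    have hplt1 : ENNReal.ofReal (3 * Real.log (Fintype.card V) / t) < 1 := by
      apply ENNReal.ofReal_lt_one.2
      rw [div_lt_one ht0]
      nlinarith
    by_cases hfar : ∃ q : V × V, q.1 ≠ q.2 ∧ t < G.dist q.1 q.2
    · obtain ⟨⟨v₀, u₀⟩, hne₀, hd₀⟩ := hfar
      have hd₀' : t < G.dist v₀ u₀ := hd₀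
      have hdist_lt : G.dist v₀ u₀ < Fintype.card V := by
        obtain ⟨w⟩ := hconn v₀ u₀
        calc G.dist v₀ u₀ ≤ w.bypass.length := SimpleGraph.dist_le _
          _ < Fintype.card V := (SimpleGraph.Walk.bypass_isPath w).length_lt
      have htn : t < Fintype.card V := lt_trans hd₀' hdist_lt
      have hn3 : 3 ≤ Fintype.card V := by omega
      have hlog1 : (1 : ℝ) < Real.log (Fintype.card V) := by
        rw [show (1:ℝ) = Real.log (Real.exp 1) by rw [Real.log_exp]]
        apply Real.log_lt_log (Real.exp_pos 1)
        calc Real.exp 1 < 2.7182818286 := Real.exp_one_lt_d9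
          _ < 3 := by norm_num
          _ ≤ (Fintype.card V : ℝ) := by exact_mod_cast hn3
      set n := Fintype.card V with hndef
      have hNt : (t : ℝ) < (n : ℝ) := by exact_mod_cast htn
      set x : ℝ := 3 * (n : ℝ) * Real.log n / t with hxdef
      have hx0 : 0 ≤ x := by positivity
      have hx3 : 3 < x := by
        rw [hxdef, lt_div_iff₀ ht0]
        nlinarith
      set k : ℕ := ⌈x⌉₊ with hkdef
      have hkx : (k : ℝ) < x + 1 := Nat.ceil_lt_add_one hx0
      have hkge : x ≤ (k : ℝ) := Nat.le_ceil x
      have hxn2 : x ≤ (n : ℝ) / 2 := by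
        rw [hxdef, div_le_div_iff₀ ht0 (by norm_num)]
        nlinarith
      have hk_le_n : k ≤ n := by
        have : (k : ℝ) ≤ (n : ℝ) := by
          have hn3' : (3 : ℝ) ≤ (n : ℝ) := by exact_mod_cast hn3
          linarith
        exact_mod_cast this
      have hk_row : (k : ℝ) ≤ 2 * 3 * (n : ℝ) * Real.log n / t := by
        have : 2 * 3 * (n : ℝ) * Real.log n / t = 2 * x := by rw [hxdef]; ring
        rw [this]; linarith
      -- the combinatorial existence
      set F : Finset (V × V) :=
        Finset.univ.filter (fun q : V × V => q.1 ≠ q.2 ∧ t < G.dist q.1 q.2) with hFdef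
      have hQ : ∀ q ∈ F, (P q.1 q.2).card = t := by
        intro q hq
        rw [hFdef, Finset.mem_filter] at hq
        exact (hP q.1 q.2 hq.2.2).1
      have hFcard : F.card ≤ n ^ 2 := by
        calc F.card ≤ (Finset.univ : Finset (V × V)).card := Finset.card_filter_le _ _
          _ = n ^ 2 := by rw [Finset.card_univ, Fintype.card_prod]; ring
      have hnum : F.card * ((n - 1).choose k) ^ t * (n.choose k) ^ (n - t) <
          (n.choose k) ^ n := by
        have h1 : F.card * ((n - 1).choose k) ^ t * (n.choose k) ^ (n - t) ≤
            n ^ 2 * ((n - 1).choose k) ^ t * (n.choose k) ^ (n - t) :=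
          Nat.mul_le_mul_right _ (Nat.mul_le_mul_right _ hFcard)
        refine lt_of_le_of_lt h1 (num_ineq n k t (by omega) hk_le_n ht htn.le ?_)
        calc 3 * (n : ℝ) * Real.log n = x * t := by rw [hxdef]; field_simp
          _ ≤ (k : ℝ) * t := by
              apply mul_le_mul_of_nonneg_right hkge ht0.le
      obtain ⟨g, hgcard, hgood⟩ := exists_good V k t (fun q => P q.1 q.2) F hQ hnum htn.le
      refine pi_point_pos _ (ENNReal.coe_le_one_iff.mp hp) (fun q => decide (q.2 ∈ g q.1)) _ ⟨?_, ?_⟩ ?_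
      · intro v u hne hd
        obtain ⟨w, hw, hmem⟩ := hgood (v, u) (by
          rw [hFdef, Finset.mem_filter]
          exact ⟨Finset.mem_univ _, hne, hd⟩)
        exact ⟨w, hw, by simp [hmem]⟩
      · intro v
        have heq : (Finset.univ.filter fun u : V => decide (u ∈ g v) = true) = g v := by
          ext u; simp
        rw [heq, hgcard v]
        exact hk_row
      · intro i
        rw [PMF.bernoulli_apply]
        cases hdec : decide (i.2 ∈ g i.1)
        · simp only [hdec, Bool.cond_false]
          exact tsub_pos_of_lt hplt1
        · simp only [hdec, Bool.cond_true]
          apply ENNReal.ofReal_pos.2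
          have : (0:ℝ) < Real.log n := by linarith
          positivity
    · -- no far pairs: f₀ ≡ false
      refine pi_point_pos _ (ENNReal.coe_le_one_iff.mp hp) (fun _ => false) _ ⟨?_, ?_⟩ ?_
      · intro v u hne hd
        exact absurd ⟨(v, u), hne, hd⟩ hfar
      · intro v
        have heq : (Finset.univ.filter fun _ : V => (false : Bool) = true) = ∅ := by
          simp
        rw [heq, Finset.card_empty]
        have hcard0 : (0 : ℝ) ≤ (Fintype.card V : ℝ) := by positivity
        push_cast
        apply div_nonneg (by nlinarith) ht0.le
      · intro i
        rw [PMF.bernoulli_apply]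
        simp only [Bool.cond_false]
        exact tsub_pos_of_lt hplt1
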